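/- arXiv:1401.0688 — 2 statements merged into one kernel-verified Lean document; each statement's English description precedes it below -/
import Mathlib

section
/- (The unique quantile uniquely minimizes the expected check loss.) Let u be an integrable real random variable with distribution function F, let τ ∈ (0,1), and suppose ξ ∈ ℝ satisfies F(ξ − ε) < τ < F(ξ + ε) for all ε > 0 (so ξ is the unique τ-th quantile of u). Define H(x) = E[ρ_τ(u − x) − ρ_τ(u − ξ)], where ρ_τ(v) = v(τ − 1{v<0}). Then H(x) ≥ 0 for all x ∈ ℝ, and H(x) = 0 if and only if x = ξ. -/
open MeasureTheory

private noncomputable def Dfun {Ω : Type*} (τ : ℝ) (v : Ω → ℝ) (c d : ℝ) (ω : Ω) : ℝ :=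
  (v ω - d) * (τ - if v ω - d < 0 then 1 else 0) - (v ω - c) * (τ - if v ω - c < 0 then 1 else 0)

private lemma check_lip {τ a b : ℝ} (h0 : 0 < τ) (h1 : τ < 1) :
    |a * (τ - if a < 0 then 1 else 0) - b * (τ - if b < 0 then 1 else 0)| ≤ |a - b| := by
  rcases abs_cases (a - b) with ⟨h, h'⟩ | ⟨h, h'⟩ <;> rw [abs_le] <;> constructor <;>
    split_ifs <;> nlinarith

private lemma check_lb1 {τ c d s w : ℝ} (h0 : 0 < τ) (h1 : τ < 1) (hcd : c ≤ d) (hsc : s < c) :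
    (d - c) * ((if w ≤ s then (1:ℝ) else 0) - τ) ≤
      (w - d) * (τ - if w - d < 0 then 1 else 0) - (w - c) * (τ - if w - c < 0 then 1 else 0) := by
  split_ifs <;> nlinarith

private lemma check_lb2 {τ c d s w : ℝ} (h0 : 0 < τ) (h1 : τ < 1) (hcd : c ≤ d) (hds : d ≤ s) :
    (d - c) * (τ - (if w ≤ s then (1:ℝ) else 0)) ≤
      (w - c) * (τ - if w - c < 0 then 1 else 0) - (w - d) * (τ - if w - d < 0 then 1 else 0) := by
  split_ifs <;> nlinarith

section
variable {Ω : Type*} [MeasurableSpace Ω] (μ : Measure Ω) [IsProbabilityMeasure μ]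
  {v : Ω → ℝ} (hv : Measurable v) {τ : ℝ} (h0 : 0 < τ) (h1 : τ < 1)

include hv

private lemma Dmeas (c d : ℝ) : Measurable (Dfun τ v c d) := by
  unfold Dfun
  apply Measurable.sub <;>
  · apply Measurable.mul (hv.sub_const _)
    apply Measurable.sub measurable_const
    exact Measurable.ite ((hv.sub_const _) measurableSet_Iio) measurable_const measurable_const

include h0 h1 in
private lemma Dint (c d : ℝ) : Integrable (Dfun τ v c d) μ := by
  refine Integrable.mono' (integrable_const |d - c|) (Dmeas hv c d).aestronglyMeasurable ?_
  refine Filter.Eventually.of_forall fun ω => ?_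
  have := check_lip (a := v ω - d) (b := v ω - c) h0 h1
  simpa [Dfun] using this.trans_eq (by rw [show v ω - d - (v ω - c) = -(d - c) by ring, abs_neg])

private lemma indint (s : ℝ) : Integrable (fun ω => if v ω ≤ s then (1:ℝ) else 0) μ := by
  refine Integrable.mono' (integrable_const 1) ?_ ?_
  · exact (Measurable.ite (hv measurableSet_Iic) measurable_const measurable_const).aestronglyMeasurable
  · exact Filter.Eventually.of_forall fun ω => by split_ifs <;> simp

private lemma indval (s : ℝ) :
    ∫ ω, (if v ω ≤ s then (1:ℝ) else 0) ∂μ = (μ {ω | v ω ≤ s}).toReal := by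
  have h : (fun ω => if v ω ≤ s then (1:ℝ) else 0)
      = Set.indicator {ω | v ω ≤ s} (fun _ => (1:ℝ)) := by
    funext ω; simp [Set.indicator_apply, Set.mem_setOf_eq]
  have hs : MeasurableSet {ω | v ω ≤ s} := hv measurableSet_Iic
  rw [h, integral_indicator_const (1:ℝ) hs, smul_eq_mul, mul_one]
  rfl

include h0 h1 in
private lemma Dlow1 {c d s : ℝ} (hcd : c ≤ d) (hsc : s < c) :
    (d - c) * ((μ {ω | v ω ≤ s}).toReal - τ) ≤ ∫ ω, Dfun τ v c d ω ∂μ := by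
  have key : ∫ ω, ((d - c) * ((if v ω ≤ s then (1:ℝ) else 0) - τ)) ∂μ
      = (d - c) * ((μ {ω | v ω ≤ s}).toReal - τ) := by
    rw [integral_const_mul, integral_sub (indint μ hv s) (integrable_const τ),
      indval μ hv s, integral_const]
    simp
  rw [← key]
  refine integral_mono ?_ (Dint μ hv h0 h1 c d) fun ω => check_lb1 h0 h1 hcd hsc
  exact ((indint μ hv s).sub (integrable_const τ)).const_mul _

include h0 h1 in
private lemma Dlow2 {c d s : ℝ} (hcd : c ≤ d) (hds : d ≤ s) :
    (d - c) * (τ - (μ {ω | v ω ≤ s}).toReal) ≤ ∫ ω, Dfun τ v d c ω ∂μ := by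
  have key : ∫ ω, ((d - c) * (τ - (if v ω ≤ s then (1:ℝ) else 0))) ∂μ
      = (d - c) * (τ - (μ {ω | v ω ≤ s}).toReal) := by
    rw [integral_const_mul, integral_sub (integrable_const τ) (indint μ hv s),
      indval μ hv s, integral_const]
    simp
  rw [← key]
  refine integral_mono ?_ (Dint μ hv h0 h1 d c) fun ω => check_lb2 h0 h1 hcd hds
  exact ((integrable_const τ).sub (indint μ hv s)).const_mul _

include h0 h1 in
private lemma Dabs (c d : ℝ) : |∫ ω, Dfun τ v c d ω ∂μ| ≤ |d - c| := by
  have hn := norm_integral_le_integral_norm (μ := μ) (Dfun τ v c d)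
  rw [Real.norm_eq_abs] at hn
  refine hn.trans ?_
  calc ∫ ω, ‖Dfun τ v c d ω‖ ∂μ ≤ ∫ _ω, |d - c| ∂μ := by
        refine integral_mono ((Dint μ hv h0 h1 c d).norm) (integrable_const _) fun ω => ?_
        rw [Real.norm_eq_abs]
        have := check_lip (a := v ω - d) (b := v ω - c) h0 h1
        simpa [Dfun] using this.trans_eq (by rw [show v ω - d - (v ω - c) = -(d - c) by ring, abs_neg])
    _ = |d - c| := by simp

include h0 h1 in
private lemma Dtel (a b c : ℝ) :
    ∫ ω, Dfun τ v a c ω ∂μ = (∫ ω, Dfun τ v b c ω ∂μ) + ∫ ω, Dfun τ v a b ω ∂μ := by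
  rw [← integral_add (Dint μ hv h0 h1 b c) (Dint μ hv h0 h1 a b)]
  exact integral_congr_ae (Filter.Eventually.of_forall fun ω => by unfold Dfun; ring)

end

section
variable {Ω : Type*} [MeasurableSpace Ω] (μ : Measure Ω) [IsProbabilityMeasure μ]
  {v : Ω → ℝ} (hv : Measurable v) {τ : ℝ} (h0 : 0 < τ) (h1 : τ < 1)

include hv h0 h1 in
private lemma Dpos {ξ : ℝ}
    (hq : ∀ ε > (0:ℝ), (μ {ω | v ω ≤ ξ - ε}).toReal < τ ∧ τ < (μ {ω | v ω ≤ ξ + ε}).toReal)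
    {x : ℝ} (hx : x ≠ ξ) : 0 < ∫ ω, Dfun τ v ξ x ω ∂μ := by
  have hGgt : ∀ s, ξ < s → τ < (μ {ω | v ω ≤ s}).toReal := by
    intro s hs
    have := (hq (s - ξ) (by linarith)).2
    rwa [show ξ + (s - ξ) = s by ring] at this
  have hGlt : ∀ s, s < ξ → (μ {ω | v ω ≤ s}).toReal < τ := by
    intro s hs
    have := (hq (ξ - s) (by linarith)).1
    rwa [show ξ - (ξ - s) = s by ring] at this
  rcases lt_or_gt_of_ne hx with hxlt | hxgt
  · -- x < ξ
    obtain ⟨m1, hm1def⟩ : ∃ y, y = (x + ξ) / 2 := ⟨_, rfl⟩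
    obtain ⟨s1, hs1def⟩ : ∃ y, y = (m1 + ξ) / 2 := ⟨_, rfl⟩
    have hm1 : x < m1 := by rw [hm1def]; linarith
    have hm1ξ : m1 < ξ := by rw [hm1def]; linarith
    have hs1a : m1 ≤ s1 := by rw [hs1def]; linarith
    have hs1b : s1 < ξ := by rw [hs1def]; linarith
    obtain ⟨δ, hδdef⟩ : ∃ y, y = (m1 - x) * (τ - (μ {ω | v ω ≤ s1}).toReal) := ⟨_, rfl⟩
    have hδ : 0 < δ := by
      rw [hδdef]; exact mul_pos (by linarith) (by have := hGlt s1 hs1b; linarith)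
    obtain ⟨m2, hm2def⟩ : ∃ y, y = ξ - min δ (ξ - m1) / 2 := ⟨_, rfl⟩
    have hmin : 0 < min δ (ξ - m1) := lt_min hδ (by linarith)
    have hm2a : m1 ≤ m2 := by
      have := min_le_right δ (ξ - m1); rw [hm2def]; linarith
    have hm2b : m2 < ξ := by rw [hm2def]; linarith
    have hm2c : ξ - m2 ≤ δ / 2 := by
      have := min_le_left δ (ξ - m1); rw [hm2def]; linarith
    obtain ⟨s2, hs2def⟩ : ∃ y, y = (m2 + ξ) / 2 := ⟨_, rfl⟩
    have hs2a : m2 ≤ s2 := by rw [hs2def]; linarith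
    have hs2b : s2 < ξ := by rw [hs2def]; linarith
    have hA : δ ≤ ∫ ω, Dfun τ v m1 x ω ∂μ := by
      have := Dlow2 μ hv h0 h1 (c := x) (d := m1) (s := s1) hm1.le hs1a
      linarith
    have hB : 0 ≤ ∫ ω, Dfun τ v m2 m1 ω ∂μ := by
      have h' := Dlow2 μ hv h0 h1 (c := m1) (d := m2) (s := s2) hm2a hs2a
      have : 0 ≤ (m2 - m1) * (τ - (μ {ω | v ω ≤ s2}).toReal) :=
        mul_nonneg (by linarith) (by have := hGlt s2 hs2b; linarith)
      linarith
    have hC : -(δ / 2) ≤ ∫ ω, Dfun τ v ξ m2 ω ∂μ := by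
      have h' := Dabs μ hv h0 h1 ξ m2
      have : |m2 - ξ| = ξ - m2 := by rw [abs_sub_comm]; exact abs_of_nonneg (by linarith)
      rw [this] at h'
      have := (abs_le.1 h').1
      linarith
    have t1 := Dtel μ hv h0 h1 ξ m1 x
    have t2 := Dtel μ hv h0 h1 ξ m2 m1
    rw [t1, t2]
    linarith
  · -- ξ < x
    obtain ⟨m2, hm2def⟩ : ∃ y, y = (ξ + x) / 2 := ⟨_, rfl⟩
    obtain ⟨s2, hs2def⟩ : ∃ y, y = (ξ + m2) / 2 := ⟨_, rfl⟩
    have hm2 : ξ < m2 := by rw [hm2def]; linarith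
    have hm2x : m2 < x := by rw [hm2def]; linarith
    have hs2a : ξ < s2 := by rw [hs2def]; linarith
    have hs2b : s2 < m2 := by rw [hs2def]; linarith
    obtain ⟨δ, hδdef⟩ : ∃ y, y = (x - m2) * ((μ {ω | v ω ≤ s2}).toReal - τ) := ⟨_, rfl⟩
    have hδ : 0 < δ := by
      rw [hδdef]; exact mul_pos (by linarith) (by have := hGgt s2 hs2a; linarith)
    obtain ⟨m1, hm1def⟩ : ∃ y, y = ξ + min δ (m2 - ξ) / 2 := ⟨_, rfl⟩
    have hmin : 0 < min δ (m2 - ξ) := lt_min hδ (by linarith)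
    have hm1a : ξ < m1 := by rw [hm1def]; linarith
    have hm1b : m1 ≤ m2 := by
      have := min_le_right δ (m2 - ξ); rw [hm1def]; linarith
    have hm1c : m1 - ξ ≤ δ / 2 := by
      have := min_le_left δ (m2 - ξ); rw [hm1def]; linarith
    obtain ⟨s1, hs1def⟩ : ∃ y, y = (ξ + m1) / 2 := ⟨_, rfl⟩
    have hs1a : ξ < s1 := by rw [hs1def]; linarith
    have hs1b : s1 < m1 := by rw [hs1def]; linarith
    have hA : δ ≤ ∫ ω, Dfun τ v m2 x ω ∂μ := by
      have := Dlow1 μ hv h0 h1 (c := m2) (d := x) (s := s2) hm2x.le hs2b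
      linarith
    have hB : 0 ≤ ∫ ω, Dfun τ v m1 m2 ω ∂μ := by
      have h' := Dlow1 μ hv h0 h1 (c := m1) (d := m2) (s := s1) hm1b hs1b
      have : 0 ≤ (m2 - m1) * ((μ {ω | v ω ≤ s1}).toReal - τ) :=
        mul_nonneg (by linarith) (by have := hGgt s1 hs1a; linarith)
      linarith
    have hC : -(δ / 2) ≤ ∫ ω, Dfun τ v ξ m1 ω ∂μ := by
      have h' := Dabs μ hv h0 h1 ξ m1
      have : |m1 - ξ| = m1 - ξ := abs_of_nonneg (by linarith)
      rw [this] at h'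
      have := (abs_le.1 h').1
      linarith
    have t1 := Dtel μ hv h0 h1 ξ m2 x
    have t2 := Dtel μ hv h0 h1 ξ m1 m2
    rw [t1, t2]
    linarith

end

/-- **The unique quantile uniquely minimizes the expected check loss.**
Let `u` be an integrable real random variable with distribution function `F`,
let `τ ∈ (0,1)`, and let `ξ` satisfy `F(ξ − ε) < τ < F(ξ + ε)` for all `ε > 0`.
With `ρ_τ(v) = v(τ − 1{v<0})` and `H(x) = E[ρ_τ(u − x) − ρ_τ(u − ξ)]`,
one has `H(x) ≥ 0` for all `x`, and `H(x) = 0` iff `x = ξ`. -/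
theorem stmt10 {Ω : Type*} [MeasurableSpace Ω] (μ : Measure Ω) [IsProbabilityMeasure μ]
    (u : Ω → ℝ) (hu : Integrable u μ)
    (F : ℝ → ℝ) (hF : ∀ x, F x = (μ {ω | u ω ≤ x}).toReal)
    (τ : ℝ) (hτ : τ ∈ Set.Ioo (0 : ℝ) 1)
    (ξ : ℝ) (hξ : ∀ ε > (0 : ℝ), F (ξ - ε) < τ ∧ τ < F (ξ + ε))
    (ρ : ℝ → ℝ) (hρ : ∀ v, ρ v = v * (τ - if v < 0 then 1 else 0))
    (H : ℝ → ℝ) (hH : ∀ x, H x = ∫ ω, (ρ (u ω - x) - ρ (u ω - ξ)) ∂μ) :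
    (∀ x, 0 ≤ H x) ∧ ∀ x, (H x = 0 ↔ x = ξ) := by
  obtain ⟨τ0, τ1⟩ := hτ
  obtain ⟨v, hvsm, huv⟩ := hu.1
  have hvm : Measurable v := hvsm.measurable
  have hmeq : ∀ s : ℝ, μ {ω | u ω ≤ s} = μ {ω | v ω ≤ s} := fun s =>
    measure_congr (Filter.eventuallyEq_set.2 (huv.mono fun ω hω => by
      rw [Set.mem_setOf_eq, Set.mem_setOf_eq, hω]))
  have hH' : ∀ x, H x = ∫ ω, Dfun τ v ξ x ω ∂μ := by
    intro x; rw [hH]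
    refine integral_congr_ae ?_
    filter_upwards [huv] with ω hω
    rw [hρ, hρ, hω]; rfl
  have hq : ∀ ε > (0:ℝ), (μ {ω | v ω ≤ ξ - ε}).toReal < τ ∧ τ < (μ {ω | v ω ≤ ξ + ε}).toReal := by
    intro ε hε
    have h := hξ ε hε
    rwa [hF, hF, hmeq, hmeq] at h
  have hpos : ∀ x, x ≠ ξ → 0 < H x := fun x hx => by
    rw [hH' x]; exact Dpos μ hvm τ0 τ1 hq hx
  have hzero : H ξ = 0 := by
    rw [hH' ξ]; simp [Dfun]
  refine ⟨fun x => ?_, fun x => ⟨fun h => ?_, fun h => by rw [h, hzero]⟩⟩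
  · by_cases hx : x = ξ
    · rw [hx, hzero]
    · exact (hpos x hx).le
  · by_contra hx
    exact (hpos x hx).ne' h
end

section
/- (First identity condition from the identifiability proof.) Let a, A, B, ξ, ξ' ∈ ℝ and c₁, c₂, c₁', c₂', C, D ≥ 0. If for every x ∈ ℝ one has a·x + A − ξ·√(c₁((x+B)⁺)² + c₂((x+B)⁻)² + C) + ξ'·√(c₁'(x⁺)² + c₂'(x⁻)² + D) = 0, then a − ξ√c₁ + ξ'√c₁' = 0 and a + ξ√c₂ − ξ'√c₂' = 0. -/
open Filter Topology

private lemma sqrt_div_tendsto (c b C : ℝ) (hc : 0 ≤ c) (hC : 0 ≤ C) :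
    Tendsto (fun x : ℝ => Real.sqrt (c * (x + b) ^ 2 + C) / x) atTop (𝓝 (Real.sqrt c)) := by
  have hb : Tendsto (fun x : ℝ => (x + b) / x) atTop (𝓝 1) := by
    have h1 : Tendsto (fun x : ℝ => 1 + b / x) atTop (𝓝 (1 + 0)) :=
      tendsto_const_nhds.add (tendsto_const_nhds.div_atTop tendsto_id)
    rw [add_zero] at h1
    refine h1.congr' ?_
    filter_upwards [eventually_gt_atTop 0] with x hx
    field_simp
  have hCx : Tendsto (fun x : ℝ => C / x ^ 2) atTop (𝓝 0) :=
    tendsto_const_nhds.div_atTop (tendsto_pow_atTop two_ne_zero)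
  have h1 : Tendsto (fun x : ℝ => c * ((x + b) / x) ^ 2 + C / x ^ 2) atTop (𝓝 c) := by
    have := ((tendsto_const_nhds (x := c)).mul (hb.pow 2)).add hCx
    simpa using this
  have h2 := h1.sqrt
  refine h2.congr' ?_
  filter_upwards [eventually_gt_atTop 0] with x hx
  have hx2 : (0:ℝ) < x ^ 2 := by positivity
  have hnum : 0 ≤ c * (x + b) ^ 2 + C := by positivity
  have : c * ((x + b) / x) ^ 2 + C / x ^ 2 = (c * (x + b) ^ 2 + C) / x ^ 2 := by
    field_simp
  rw [this, Real.sqrt_div hnum, Real.sqrt_sq hx.le]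

private lemma key_aux (α β b ξ ξ' c c' C D : ℝ) (hc : 0 ≤ c) (hc' : 0 ≤ c')
    (hC : 0 ≤ C) (hD : 0 ≤ D)
    (h : ∀ᶠ x : ℝ in atTop, α * x + β - ξ * Real.sqrt (c * (x + b) ^ 2 + C)
      + ξ' * Real.sqrt (c' * x ^ 2 + D) = 0) :
    α - ξ * Real.sqrt c + ξ' * Real.sqrt c' = 0 := by
  set f : ℝ → ℝ := fun x => (α * x + β - ξ * Real.sqrt (c * (x + b) ^ 2 + C)
      + ξ' * Real.sqrt (c' * x ^ 2 + D)) / x with hf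
  have hα : Tendsto (fun x : ℝ => (α * x + β) / x) atTop (𝓝 α) := by
    have h1 : Tendsto (fun x : ℝ => α + β / x) atTop (𝓝 (α + 0)) :=
      tendsto_const_nhds.add (tendsto_const_nhds.div_atTop tendsto_id)
    rw [add_zero] at h1
    refine h1.congr' ?_
    filter_upwards [eventually_gt_atTop 0] with x hx
    field_simp
  have e1 := sqrt_div_tendsto c b C hc hC
  have e2 : Tendsto (fun x : ℝ => Real.sqrt (c' * x ^ 2 + D) / x) atTop (𝓝 (Real.sqrt c')) := by
    have := sqrt_div_tendsto c' 0 D hc' hD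
    simpa using this
  have hA : Tendsto f atTop (𝓝 (α - ξ * Real.sqrt c + ξ' * Real.sqrt c')) := by
    have := (hα.sub ((tendsto_const_nhds (x := ξ)).mul e1)).add ((tendsto_const_nhds (x := ξ')).mul e2)
    refine this.congr fun x => ?_
    simp only [hf, sub_div, add_div, mul_div_assoc]
  have hB : Tendsto f atTop (𝓝 0) := by
    refine tendsto_const_nhds.congr' ?_
    filter_upwards [h] with x hx
    simp [hf, hx]
  exact (tendsto_nhds_unique hB hA).symm

/-- **First identity condition from the identifiability proof.**
If `a·x + A − ξ·√(c₁((x+B)⁺)² + c₂((x+B)⁻)² + C) + ξ'·√(c₁'(x⁺)² + c₂'(x⁻)² + D) = 0`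
for every real `x`, then `a − ξ√c₁ + ξ'√c₁' = 0` and `a + ξ√c₂ − ξ'√c₂' = 0`. -/
theorem stmt11 (a A B ξ ξ' c₁ c₂ c₁' c₂' C D : ℝ)
    (hc₁ : 0 ≤ c₁) (hc₂ : 0 ≤ c₂) (hc₁' : 0 ≤ c₁') (hc₂' : 0 ≤ c₂')
    (hC : 0 ≤ C) (hD : 0 ≤ D)
    (hid : ∀ x : ℝ,
      a * x + A
        - ξ * Real.sqrt (c₁ * (max (x + B) 0) ^ 2 + c₂ * (max (-(x + B)) 0) ^ 2 + C)
        + ξ' * Real.sqrt (c₁' * (max x 0) ^ 2 + c₂' * (max (-x) 0) ^ 2 + D) = 0) :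
    a - ξ * Real.sqrt c₁ + ξ' * Real.sqrt c₁' = 0 ∧
      a + ξ * Real.sqrt c₂ - ξ' * Real.sqrt c₂' = 0 := by
  constructor
  · apply key_aux a A B ξ ξ' c₁ c₁' C D hc₁ hc₁' hC hD
    filter_upwards [eventually_ge_atTop (max 0 (-B))] with x hx
    have hx0 : 0 ≤ x := le_trans (le_max_left _ _) hx
    have hxB : 0 ≤ x + B := by
      have := le_trans (le_max_right _ _) hx; linarith
    have h1 : max (x + B) 0 = x + B := max_eq_left hxB
    have h2 : max (-(x + B)) 0 = 0 := max_eq_right (by linarith)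
    have h3 : max x 0 = x := max_eq_left hx0
    have h4 : max (-x) 0 = 0 := max_eq_right (by linarith)
    have := hid x
    rw [h1, h2, h3, h4] at this
    simpa using this
  · have := key_aux (-a) A (-B) ξ ξ' c₂ c₂' C D hc₂ hc₂' hC hD ?_
    · linarith
    filter_upwards [eventually_ge_atTop (max 0 B)] with y hy
    have hy0 : 0 ≤ y := le_trans (le_max_left _ _) hy
    have hyB : 0 ≤ y - B := by
      have := le_trans (le_max_right _ _) hy; linarith
    have h1 : max (-y + B) 0 = 0 := max_eq_right (by linarith)
    have h2 : max (-(-y + B)) 0 = y - B := by rw [max_eq_left (by linarith)]; ring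
    have h3 : max (-y) 0 = 0 := max_eq_right (by linarith)
    have h4 : max (-(-y)) 0 = y := by rw [max_eq_left (by linarith)]; ring
    have := hid (-y)
    rw [h1, h2, h3, h4] at this
    have heq : y + -B = y - B := by ring
    rw [heq]
    simpa using this
end
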